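/- Let Q be a finite quiver and w ∈ ℤ^{Q_1} a nonzero element of Ker(U), where U : ℤ^{Q_1} → ℤ^{Q_0} sends f_α to e_{t(α)} - e_{s(α)}. Then there exists a vector u ∈ ℤ^{Q_1} associated to a primitive nonoriented cycle in Q (so each u_α ∈ {-1,0,1} and u ∈ Ker(U), u ≠ 0) such that u⁺ ≤ w⁺ and u⁻ ≤ w⁻ componentwise. -/

import Mathlib

namespace QuiverCycles

variable {V A : Type} (s t : A → V)

/-- Source of an edge of the double quiver (`inl a` = arrow `a`, `inr a` = its formal inverse). -/
def esrc : A ⊕ A → V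
  | Sum.inl a => s a
  | Sum.inr a => t a

/-- Target of an edge of the double quiver. -/
def etgt : A ⊕ A → V
  | Sum.inl a => t a
  | Sum.inr a => s a

/-- Formal inverse of an edge of the double quiver. -/
def erev : A ⊕ A → A ⊕ A
  | Sum.inl a => Sum.inr a
  | Sum.inr a => Sum.inl a

/-- `e :: l` is a nonoriented cycle: consecutive edges match up without backtracking, and the
last edge closes up with the first one, again without backtracking. -/
def IsNonorientedCycle (e : A ⊕ A) (l : List (A ⊕ A)) : Prop :=
  List.Chain (fun f g => etgt s t f = esrc s t g ∧ g ≠ erev f) e l ∧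
    etgt s t ((e :: l).getLast (List.cons_ne_nil e l)) = esrc s t e ∧
    (l ≠ [] → e ≠ erev ((e :: l).getLast (List.cons_ne_nil e l)))

/-- A nonoriented cycle is primitive iff it visits every vertex at most once. -/
def IsPrimitive (e : A ⊕ A) (l : List (A ⊕ A)) : Prop :=
  ((e :: l).map (esrc s t)).Nodup

/-- The vector in `ℤ^{Q_1}` associated with a nonoriented cycle. -/
def cycVec [DecidableEq A] (c : List (A ⊕ A)) : A → ℤ :=
  fun a => (c.count (Sum.inl a) : ℤ) - (c.count (Sum.inr a) : ℤ)

end QuiverCycles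

namespace QC2
open QuiverCycles

instance sumLawfulBEq {X Y : Type} [BEq X] [BEq Y] [LawfulBEq X] [LawfulBEq Y] :
    LawfulBEq (X ⊕ Y) where
  eq_of_beq {a b} h := by
    cases a <;> cases b
    · exact congrArg Sum.inl (eq_of_beq
        (by rw [show ((Sum.inl _ == Sum.inl _) = (_ == _)) from rfl] at h; exact h))
    · exact absurd h (by rw [show ((Sum.inl _ == Sum.inr _) = false) from rfl]; simp)
    · exact absurd h (by rw [show ((Sum.inr _ == Sum.inl _) = false) from rfl]; simp)
    · exact congrArg Sum.inr (eq_of_beq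
        (by rw [show ((Sum.inr _ == Sum.inr _) = (_ == _)) from rfl] at h; exact h))
  rfl {a} := by
    cases a with
    | inl x => show (x == x) = true; exact beq_self_eq_true x
    | inr y => show (y == y) = true; exact beq_self_eq_true y

theorem count_inst_eq {X : Type} [DecidableEq X] (i2 : BEq X) [h2 : @LawfulBEq X i2]
    (a : X) (l : List X) :
    @List.count X i2 a l = @List.count X instBEqOfDecidableEq a l := by
  induction l with
  | nil => rfl
  | cons b l ih =>
    rw [@List.count_cons X i2, @List.count_cons X instBEqOfDecidableEq, ih,
      @beq_eq_decide X i2 h2, @beq_eq_decide X instBEqOfDecidableEq inferInstance]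

lemma chain_of_succ {X : Type} (R : X → X → Prop) (g : ℕ → X)
    (h : ∀ k, R (g k) (g (k+1))) : ∀ (n i : ℕ), List.Chain R (g i) ((List.range' (i+1) n).map g)
  | 0, i => List.Chain.nil
  | n+1, i => by
    rw [List.range'_succ, List.map_cons]
    exact List.Chain.cons (h i) (chain_of_succ R g h n (i+1))

lemma getLast_range'_map {X : Type} (g : ℕ → X)
    (n i : ℕ) (h : (List.range' i (n+1)).map g ≠ []) :
      ((List.range' i (n+1)).map g).getLast h = g (i + n) := by
  rw [List.getLast_eq_getElem]
  simp

lemma telescope {V A : Type} [DecidableEq V] (s t : A → V) :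
    ∀ (l : List (A ⊕ A)) (e : A ⊕ A),
      List.Chain (fun f g => etgt s t f = esrc s t g) e l →
      ((e :: l).map (fun x => (Pi.single (etgt s t x) 1 - Pi.single (esrc s t x) 1 : V → ℤ))).sum
        = Pi.single (etgt s t ((e :: l).getLast (List.cons_ne_nil e l))) 1
            - Pi.single (esrc s t e) 1
  | [], e, _ => by simp
  | f :: l', e, h => by
    simp only [List.Chain, List.chain_cons] at h
    have ih := telescope s t l' f h.2
    rw [List.getLast_cons (List.cons_ne_nil f l')]
    simp only [List.map_cons, List.sum_cons] at ih ⊢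
    rw [ih, ← h.1]
    abel

/-- Core graph-theoretic lemma: from an edge set `E` with no reversals such that every walk
inside `E` can be continued, build a primitive nonoriented cycle with all edges in `E`. -/
lemma exists_primitive_cycle {V A : Type} [Finite V] (s t : A → V) (E : A ⊕ A → Prop)
    (hrev : ∀ e, E e → ¬ E (erev e))
    (key : ∀ e, E e → ∃ f, E f ∧ esrc s t f = etgt s t e)
    (e0 : A ⊕ A) (he0 : E e0) :
    ∃ e l, IsNonorientedCycle s t e l ∧ IsPrimitive s t e l ∧ ∀ f ∈ e :: l, E f := by
  classical
  set F : {e : A ⊕ A // E e} → {e : A ⊕ A // E e} :=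
    fun p => ⟨(key p.1 p.2).choose, (key p.1 p.2).choose_spec.1⟩ with hF
  set g : ℕ → A ⊕ A := fun n => (F^[n] ⟨e0, he0⟩).1 with hg
  have hE : ∀ n, E (g n) := fun n => (F^[n] ⟨e0, he0⟩).2
  have hstep : ∀ n, esrc s t (g (n+1)) = etgt s t (g n) := by
    intro n
    have h1 : F^[n+1] ⟨e0, he0⟩ = F (F^[n] ⟨e0, he0⟩) := Function.iterate_succ_apply' F n _
    show esrc s t (F^[n+1] ⟨e0, he0⟩).1 = etgt s t (F^[n] ⟨e0, he0⟩).1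
    rw [h1]
    exact (key (F^[n] ⟨e0, he0⟩).1 (F^[n] ⟨e0, he0⟩).2).choose_spec.2
  set vseq : ℕ → V := fun n => esrc s t (g n) with hvseq
  have hex : ∃ j, ∃ i, i < j ∧ vseq i = vseq j := by
    obtain ⟨x, y, hxy, hv⟩ := Finite.exists_ne_map_eq_of_infinite vseq
    rcases hxy.lt_or_gt with h | h
    · exact ⟨y, x, h, hv⟩
    · exact ⟨x, y, h, hv.symm⟩
  set j := Nat.find hex with hj
  obtain ⟨i, hij, hv⟩ := Nat.find_spec hex
  have vinj : ∀ k k', k < j → k' < j → vseq k = vseq k' → k = k' := by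
    intro k k' hk hk' hvv
    by_contra hne
    rcases Nat.lt_or_ge k k' with h | h
    · exact Nat.find_min hex hk' ⟨k, h, hvv⟩
    · exact Nat.find_min hex hk ⟨k', lt_of_le_of_ne h (Ne.symm hne), hvv.symm⟩
  set n := j - i - 1 with hn
  have hjn : j = i + n + 1 := by omega
  have hcl : g i :: (List.range' (i+1) n).map g = (List.range' i (n+1)).map g := by
    rw [List.range'_succ, List.map_cons]
  have hlast0 : (g i :: (List.range' (i+1) n).map g).getLast (List.cons_ne_nil _ _)
      = g (i+n) := by
    cases n with
    | zero => simp
    | succ m =>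
      rw [List.getLast_cons (by simp [List.range'_succ])]
      rw [getLast_range'_map g m (i+1)]
      congr 1
      omega
  refine ⟨g i, (List.range' (i+1) n).map g, ⟨?_, ?_, ?_⟩, ?_, ?_⟩
  · exact chain_of_succ _ g
      (fun k => ⟨(hstep k).symm, fun hh => hrev _ (hE k) (hh ▸ hE (k+1))⟩) n i
  · rw [hlast0]
    have h1 : etgt s t (g (i+n)) = vseq (i+n+1) := (hstep (i+n)).symm
    rw [h1, ← hjn, ← hv]
  · intro _ hh
    rw [hlast0] at hh
    exact hrev _ (hE (i+n)) (hh ▸ hE i)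
  · show ((g i :: (List.range' (i+1) n).map g).map (esrc s t)).Nodup
    rw [hcl, List.map_map]
    refine List.Nodup.map_on ?_ (List.nodup_range' (s := i) (n := n+1))
    intro x hx y hy hxy
    rw [List.mem_range'_1] at hx hy
    exact vinj x y (by omega) (by omega) hxy
  · intro f hf
    rw [hcl] at hf
    obtain ⟨k, -, rfl⟩ := List.mem_map.mp hf
    exact hE k

end QC2

open QuiverCycles in
/-- any nonzero element `w` of `Ker U` dominates the vector `u` of some primitive
nonoriented cycle; such a `u` is nonzero, has entries in `{-1, 0, 1}` and lies in `Ker U`. -/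
theorem exists_primitive_cycle_vector_le {V A : Type} [Fintype V] [Fintype A]
    [DecidableEq V] [DecidableEq A] (s t : A → V)
    (w : A → ℤ) (hw : w ≠ 0)
    (hker : (∑ a, w a • (Pi.single (t a) 1 - Pi.single (s a) 1 : V → ℤ)) = 0) :
    ∃ (e : A ⊕ A) (l : List (A ⊕ A)),
      IsNonorientedCycle s t e l ∧ IsPrimitive s t e l ∧
      (cycVec (e :: l) : A → ℤ) ≠ 0 ∧
      (∀ a, cycVec (e :: l) a = -1 ∨ cycVec (e :: l) a = 0 ∨ cycVec (e :: l) a = 1) ∧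
      (∑ a, cycVec (e :: l) a • (Pi.single (t a) 1 - Pi.single (s a) 1 : V → ℤ)) = 0 ∧
      (∀ a, (cycVec (e :: l) a).toNat ≤ (w a).toNat) ∧
      (∀ a, (-(cycVec (e :: l) a)).toNat ≤ (-(w a)).toNat) := by
  classical
  -- pointwise form of the kernel condition
  have hpoint : ∀ v : V, (∑ a, if v = t a then w a else 0) = (∑ a, if v = s a then w a else 0) := by
    intro v
    have h0 := congrFun hker v
    simp only [Finset.sum_apply, Pi.smul_apply, Pi.sub_apply, Pi.single_apply, Pi.zero_apply,
      smul_eq_mul] at h0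
    have hterm : ∀ a : A, w a * ((if v = t a then (1:ℤ) else 0) - (if v = s a then 1 else 0))
        = (if v = t a then w a else 0) - (if v = s a then w a else 0) := by
      intro a; split_ifs <;> ring
    rw [Finset.sum_congr rfl (fun a _ => hterm a), Finset.sum_sub_distrib] at h0
    linarith
  -- the edge set of the flow
  set E : A ⊕ A → Prop := Sum.elim (fun a => 0 < w a) (fun a => w a < 0) with hEdef
  have hrev : ∀ e, E e → ¬ E (erev e) := by
    rintro (a | a) he hr <;> simp only [hEdef, erev, Sum.elim_inl, Sum.elim_inr] at he hr <;> omega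
  have key : ∀ e, E e → ∃ f, E f ∧ esrc s t f = etgt s t e := by
    intro e he
    by_contra hno
    push_neg at hno
    set v := etgt s t e with hvdef
    have ht : ∀ a, t a = v → 0 ≤ w a := by
      intro a ha
      by_contra h
      push_neg at h
      exact hno (Sum.inr a) (by simpa [hEdef] using h) ha
    have hs : ∀ a, s a = v → w a ≤ 0 := by
      intro a ha
      by_contra h
      push_neg at h
      exact hno (Sum.inl a) (by simpa [hEdef] using h) ha
    have hS1 : (0:ℤ) ≤ ∑ a, if v = t a then w a else 0 :=
      Finset.sum_nonneg fun a _ => by split_ifs with h; exacts [ht a h.symm, le_refl 0]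
    have hS2 : (∑ a, if v = s a then w a else 0) ≤ 0 :=
      Finset.sum_nonpos fun a _ => by split_ifs with h; exacts [hs a h.symm, le_refl 0]
    have hS1z : (∑ a, if v = t a then w a else 0) = 0 :=
      le_antisymm (by rw [hpoint v]; exact hS2) hS1
    have hS2z : (∑ a, if v = s a then w a else 0) = 0 :=
      le_antisymm hS2 (by rw [← hpoint v]; exact hS1)
    cases e with
    | inl a =>
      have hwa : 0 < w a := by simpa [hEdef] using he
      have hta : v = t a := rfl
      have := (Finset.sum_eq_zero_iff_of_nonneg
        (fun a _ => by split_ifs with h; exacts [ht a h.symm, le_refl 0])).mp hS1z a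
          (Finset.mem_univ a)
      rw [if_pos hta] at this
      omega
    | inr a =>
      have hwa : w a < 0 := by simpa [hEdef] using he
      have hsa : v = s a := rfl
      have := (Finset.sum_eq_zero_iff_of_nonpos
        (fun a _ => by split_ifs with h; exacts [hs a h.symm, le_refl 0])).mp hS2z a
          (Finset.mem_univ a)
      rw [if_pos hsa] at this
      omega
  -- starting edge
  obtain ⟨a0, ha0⟩ := Function.ne_iff.mp hw
  have ha0' : w a0 ≠ 0 := by simpa using ha0
  have hstart : ∃ e0, E e0 := by
    rcases lt_or_gt_of_ne ha0' with h | h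
    · exact ⟨Sum.inr a0, by simpa [hEdef] using h⟩
    · exact ⟨Sum.inl a0, by simpa [hEdef] using h⟩
  obtain ⟨e0, he0⟩ := hstart
  obtain ⟨e, l, hcyc, hprim, hmemE⟩ := QC2.exists_primitive_cycle s t E hrev key e0 he0
  set c := e :: l with hc
  have nodup_c : c.Nodup := hprim.of_map (esrc s t)
  have hcount : ∀ x : A ⊕ A, c.count x ≤ 1 := fun x => by
    exact List.nodup_iff_count_le_one.mp nodup_c x
  -- values of cycVec
  have hval1 : ∀ a, Sum.inl a ∈ c → cycVec c a = 1 ∧ 0 < w a := by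
    intro a h1
    have hwa : 0 < w a := by simpa [hEdef] using hmemE _ h1
    have h2 : Sum.inr a ∉ c := fun h2 => by
      have : w a < 0 := by simpa [hEdef] using hmemE _ h2
      omega
    have c1 : c.count (Sum.inl a) = 1 :=
      le_antisymm (hcount _) (List.count_pos_iff.mpr h1)
    have c2 : c.count (Sum.inr a) = 0 := List.count_eq_zero.mpr h2
    exact ⟨by simp [cycVec, c1, c2], hwa⟩
  have hval2 : ∀ a, Sum.inr a ∈ c → cycVec c a = -1 ∧ w a < 0 := by
    intro a h2
    have hwa : w a < 0 := by simpa [hEdef] using hmemE _ h2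
    have h1 : Sum.inl a ∉ c := fun h1 => by
      have : 0 < w a := by simpa [hEdef] using hmemE _ h1
      omega
    have c1 : c.count (Sum.inl a) = 0 := List.count_eq_zero.mpr h1
    have c2 : c.count (Sum.inr a) = 1 :=
      le_antisymm (hcount _) (List.count_pos_iff.mpr h2)
    exact ⟨by simp [cycVec, c1, c2], hwa⟩
  have hcases : ∀ a : A,
      (cycVec c a = 1 ∧ 0 < w a) ∨ cycVec c a = 0 ∨ (cycVec c a = -1 ∧ w a < 0) := by
    intro a
    by_cases h1 : Sum.inl a ∈ c
    · exact Or.inl (hval1 a h1)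
    by_cases h2 : Sum.inr a ∈ c
    · exact Or.inr (Or.inr (hval2 a h2))
    refine Or.inr (Or.inl ?_)
    have c1 : c.count (Sum.inl a) = 0 := List.count_eq_zero.mpr h1
    have c2 : c.count (Sum.inr a) = 0 := List.count_eq_zero.mpr h2
    simp [cycVec, c1, c2]
  refine ⟨e, l, hcyc, hprim, ?_, ?_, ?_, ?_, ?_⟩
  · -- nonzero
    intro h0
    have hec : e ∈ c := List.mem_cons_self
    cases e with
    | inl a =>
      have h1 := (hval1 a hec).1
      have h2 : cycVec c a = 0 := by simpa using congrFun h0 a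
      rw [h2] at h1
      norm_num at h1
    | inr a =>
      have h1 := (hval2 a hec).1
      have h2 : cycVec c a = 0 := by simpa using congrFun h0 a
      rw [h2] at h1
      norm_num at h1
  · -- entries in {-1, 0, 1}
    intro a
    rcases hcases a with ⟨h, -⟩ | h | ⟨h, -⟩ <;> simp [← hc, h]
  · -- the cycle vector lies in the kernel
    set G : A ⊕ A → (V → ℤ) :=
      fun x => (Pi.single (etgt s t x) 1 - Pi.single (esrc s t x) 1 : V → ℤ) with hGdef
    have htel : (c.map G).sum = 0 := by
      have := QC2.telescope s t l e (List.IsChain.imp (fun _ _ h => h.1) hcyc.1)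
      rw [hc, this, hcyc.2.1, sub_self]
    have hGl : ∀ a : A, G (Sum.inl a) = (Pi.single (t a) 1 - Pi.single (s a) 1 : V → ℤ) :=
      fun a => rfl
    have hGr : ∀ a : A, G (Sum.inr a) = -(Pi.single (t a) 1 - Pi.single (s a) 1 : V → ℤ) := by
      intro a
      simp only [hGdef, etgt, esrc, neg_sub]
    have hsum1 : (c.map G).sum = ∑ x : A ⊕ A, c.count x • G x := by
      rw [Finset.sum_list_map_count]
      have hc1 : ∀ x ∈ c.toFinset,
          (@List.count (A ⊕ A) instBEqOfDecidableEq x c) • G x = c.count x • G x := by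
        intro x _
        rw [QC2.count_inst_eq (Sum.instBEq) x c]
      rw [Finset.sum_congr rfl hc1]
      exact Finset.sum_subset (Finset.subset_univ _) (fun x _ hx => by
        rw [List.count_eq_zero.mpr (fun hm => hx (List.mem_toFinset.mpr hm)), zero_smul])
    have hsum2 : ∑ x : A ⊕ A, c.count x • G x
        = ∑ a, c.count (Sum.inl a) • G (Sum.inl a)
            + ∑ a, c.count (Sum.inr a) • G (Sum.inr a) :=
      Fintype.sum_sum_type _
    have hterm : ∀ a : A, cycVec c a • (Pi.single (t a) 1 - Pi.single (s a) 1 : V → ℤ)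
        = c.count (Sum.inl a) • G (Sum.inl a) + c.count (Sum.inr a) • G (Sum.inr a) := by
      intro a
      rw [hGl a, hGr a, smul_neg]
      show ((c.count (Sum.inl a) : ℤ) - (c.count (Sum.inr a) : ℤ)) • _ = _
      rw [sub_smul, natCast_zsmul, natCast_zsmul, ← sub_eq_add_neg]
    calc (∑ a, cycVec c a • (Pi.single (t a) 1 - Pi.single (s a) 1 : V → ℤ))
        = ∑ a, (c.count (Sum.inl a) • G (Sum.inl a) + c.count (Sum.inr a) • G (Sum.inr a)) :=
          Finset.sum_congr rfl (fun a _ => hterm a)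
      _ = ∑ a, c.count (Sum.inl a) • G (Sum.inl a)
            + ∑ a, c.count (Sum.inr a) • G (Sum.inr a) := Finset.sum_add_distrib
      _ = (c.map G).sum := by rw [hsum1, hsum2]
      _ = 0 := htel
  · -- positive parts
    intro a
    rcases hcases a with ⟨h, h'⟩ | h | ⟨h, h'⟩ <;> rw [h] <;> omega
  · -- negative parts
    intro a
    rcases hcases a with ⟨h, h'⟩ | h | ⟨h, h'⟩ <;> rw [h] <;> omega
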